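/- Let n be odd, let S₀ be the (n+2)×(n+2) complex matrix whose only nonzero entries are (S₀)_{s,n+3−s} = (−1)^{s+1}, and let T satisfy Tᵀ·S₀·T = S₀ with block form T = [[m₁⁺, −(b⁻)ᵀ, c₁⁻], [b⁺, T₂₂, −s₀B⁻], [c₁⁺, (B⁺)ᵀs₀, m₁⁻]] and m₁⁺ ≠ 0. Set ρ⁺ := b⁺/m₁⁺, τ⁺ := b⁻/m₁⁺, m₂⁺ := T₂₂ + (b⁺(b⁻)ᵀ)/m₁⁺. Then T admits the generalized Gauss decomposition T = T_J⁻ · D_J⁺ · Ŝ_J⁺, where T_J⁻ = [[1, 0, 0], [ρ⁺, 1ₙ, 0], [(ρ⁺)ᵀs₀ρ⁺/2, (ρ⁺)ᵀs₀, 1]], D_J⁺ = diag(m₁⁺, m₂⁺, 1/m₁⁺) (block diagonal), and Ŝ_J⁺ = [[1, −(τ⁺)ᵀ, (τ⁺)ᵀs₀τ⁺/2], [0, 1ₙ, −s₀τ⁺], [0, 0, 1]]. -/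

import Mathlib

open Matrix

/-- The `n×n` matrix `s₀` with `(s₀)_{s,n+1−s} = (−1)^{s+1}` (1-indexed). -/
def s0mat (n : ℕ) : Matrix (Fin n) (Fin n) ℂ :=
  Matrix.of fun i j => if (i : ℕ) + (j : ℕ) + 1 = n then (-1 : ℂ) ^ (i : ℕ) else 0

/-- The position (0-indexed) of a `(1,n,1)`-block index inside `{0, …, n+1}`. -/
def blkIdx (n : ℕ) : Fin 1 ⊕ Fin n ⊕ Fin 1 → ℕ
  | .inl _ => 0
  | .inr (.inl k) => (k : ℕ) + 1
  | .inr (.inr _) => n + 1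

/-- The `(n+2)×(n+2)` matrix `S₀` with `(S₀)_{s,n+3−s} = (−1)^{s+1}` (1-indexed), realized
on the `(1,n,1)`-block index type. -/
def S0big (n : ℕ) : Matrix (Fin 1 ⊕ Fin n ⊕ Fin 1) (Fin 1 ⊕ Fin n ⊕ Fin 1) ℂ :=
  Matrix.of fun i j =>
    if blkIdx n i + blkIdx n j = n + 1 then (-1 : ℂ) ^ blkIdx n i else 0

/-- An `(n+2)×(n+2)` matrix given in `(1,n,1)` block form
`[[a, r₁ᵀ, b], [c₁, M, c₂], [c, r₂ᵀ, d]]`. -/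
def blk3 (n : ℕ) (a : ℂ) (r₁ : Fin n → ℂ) (b : ℂ)
    (c₁ : Fin n → ℂ) (M : Matrix (Fin n) (Fin n) ℂ) (c₂ : Fin n → ℂ)
    (c : ℂ) (r₂ : Fin n → ℂ) (d : ℂ) :
    Matrix (Fin 1 ⊕ Fin n ⊕ Fin 1) (Fin 1 ⊕ Fin n ⊕ Fin 1) ℂ :=
  Matrix.of fun i j =>
    match i, j with
    | .inl _, .inl _ => a
    | .inl _, .inr (.inl k) => r₁ k
    | .inl _, .inr (.inr _) => b
    | .inr (.inl k), .inl _ => c₁ k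
    | .inr (.inl k), .inr (.inl l) => M k l
    | .inr (.inl k), .inr (.inr _) => c₂ k
    | .inr (.inr _), .inl _ => c
    | .inr (.inr _), .inr (.inl l) => r₂ l
    | .inr (.inr _), .inr (.inr _) => d

theorem blk3_mul {n : ℕ} (a : ℂ) (r₁ : Fin n → ℂ) (b : ℂ)
    (c₁ : Fin n → ℂ) (M : Matrix (Fin n) (Fin n) ℂ) (c₂ : Fin n → ℂ)
    (c : ℂ) (r₂ : Fin n → ℂ) (d : ℂ)
    (a' : ℂ) (r₁' : Fin n → ℂ) (b' : ℂ)
    (c₁' : Fin n → ℂ) (M' : Matrix (Fin n) (Fin n) ℂ) (c₂' : Fin n → ℂ)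
    (c' : ℂ) (r₂' : Fin n → ℂ) (d' : ℂ) :
    blk3 n a r₁ b c₁ M c₂ c r₂ d * blk3 n a' r₁' b' c₁' M' c₂' c' r₂' d' =
    blk3 n (a*a' + r₁ ⬝ᵥ c₁' + b*c') (a • r₁' + r₁ ᵥ* M' + b • r₂') (a*b' + r₁ ⬝ᵥ c₂' + b*d')
      (a' • c₁ + M *ᵥ c₁' + c' • c₂) (vecMulVec c₁ r₁' + M*M' + vecMulVec c₂ r₂')
      (b' • c₁ + M *ᵥ c₂' + d' • c₂)
      (c*a' + r₂ ⬝ᵥ c₁' + d*c') (c • r₁' + r₂ ᵥ* M' + d • r₂') (c*b' + r₂ ⬝ᵥ c₂' + d*d') := by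
  ext i j
  rcases i with i | k | i <;> rcases j with j | l | j <;>
    simp [blk3, Matrix.mul_apply, Fintype.sum_sum_type, dotProduct, Matrix.vecMul,
      Matrix.mulVec, vecMulVec_apply, Finset.sum_add_distrib, mul_comm] <;> ring

theorem blk3_transpose {n : ℕ} (a : ℂ) (r₁ : Fin n → ℂ) (b : ℂ)
    (c₁ : Fin n → ℂ) (M : Matrix (Fin n) (Fin n) ℂ) (c₂ : Fin n → ℂ)
    (c : ℂ) (r₂ : Fin n → ℂ) (d : ℂ) :
    (blk3 n a r₁ b c₁ M c₂ c r₂ d)ᵀ = blk3 n a c₁ c r₁ Mᵀ r₂ b c₂ d := by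
  ext i j
  rcases i with i | k | i <;> rcases j with j | l | j <;> simp [blk3, Matrix.transpose_apply]

theorem one_eq_blk3 {n : ℕ} : (1 : Matrix (Fin 1 ⊕ Fin n ⊕ Fin 1) (Fin 1 ⊕ Fin n ⊕ Fin 1) ℂ) =
    blk3 n 1 0 0 0 1 0 0 0 1 := by
  ext i j
  rcases i with i | k | i <;> rcases j with j | l | j <;>
    simp [blk3, Matrix.one_apply, eq_iff_true_of_subsingleton]

theorem s0mat_transpose {n : ℕ} (hn : Odd n) : (s0mat n)ᵀ = s0mat n := by
  ext i j
  simp only [s0mat, Matrix.transpose_apply, Matrix.of_apply]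
  rcases eq_or_ne ((i:ℕ) + (j:ℕ) + 1) n with h | h
  · rw [if_pos (by omega), if_pos h]
    rw [neg_one_pow_eq_pow_mod_two, neg_one_pow_eq_pow_mod_two (n := (i:ℕ))]
    obtain ⟨m, hm⟩ := hn
    congr 1
    omega
  · rw [if_neg (by omega), if_neg h]

theorem s0mat_mul_self {n : ℕ} (hn : Odd n) : s0mat n * s0mat n = 1 := by
  have hn1 : 1 ≤ n := hn.pos
  ext i j
  rw [Matrix.mul_apply]
  have hi : (i : ℕ) < n := i.isLt
  have hj : (j : ℕ) < n := j.isLt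
  set k0 : Fin n := ⟨n - 1 - (i:ℕ), by omega⟩ with hk0
  have hk0v : (k0 : ℕ) = n - 1 - (i:ℕ) := rfl
  rw [Finset.sum_eq_single k0]
  · simp only [s0mat, Matrix.of_apply]
    rw [if_pos (by omega)]
    simp only [Matrix.one_apply, Fin.ext_iff]
    rcases eq_or_ne (i : ℕ) (j : ℕ) with h | h
    · rw [if_pos (by omega), if_pos h, ← pow_add]
      have : (i:ℕ) + (k0:ℕ) = n - 1 := by omega
      rw [this]
      obtain ⟨m, hm⟩ := hn
      rw [hm]
      simp [pow_succ, pow_mul]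
    · rw [if_neg (by omega), if_neg h, mul_zero]
  · intro b _ hb
    have hb' : (b:ℕ) ≠ n - 1 - (i:ℕ) := fun h => hb (Fin.ext (by rw [hk0v]; exact h))
    simp only [s0mat, Matrix.of_apply]
    rw [if_neg (by omega), zero_mul]
  · intro h
    exact absurd (Finset.mem_univ _) h

theorem S0big_eq {n : ℕ} (hn : Odd n) :
    S0big n = blk3 n 0 0 1 0 (-(s0mat n)) 0 1 0 0 := by
  have hn1 : 1 ≤ n := hn.pos
  have hpow : ((-1 : ℂ)) ^ (n + 1) = 1 := by
    obtain ⟨m, hm⟩ := hn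
    rw [hm, show 2 * m + 1 + 1 = 2 * (m + 1) by ring, pow_mul]
    norm_num
  ext i j
  rcases i with i | k | i <;> rcases j with j | l | j <;>
    dsimp only [S0big, blk3, blkIdx, s0mat, Matrix.of_apply, Matrix.neg_apply, Pi.zero_apply]
  · erw [if_neg (by omega)]
  · erw [if_neg (by have := l.isLt; omega)]
  · erw [if_pos (by omega)]; norm_num
  · erw [if_neg (by have := k.isLt; omega)]
  · rcases eq_or_ne ((k:ℕ) + (l:ℕ) + 1) n with h | h
    · erw [if_pos (by omega), if_pos h, pow_succ]; ring
    · erw [if_neg (by omega), if_neg h]; ring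
  · erw [if_neg (by omega)]
  · erw [if_pos (by omega), hpow]
  · erw [if_neg (by omega)]
  · erw [if_neg (by omega)]

theorem vecMulVec_zero_left {n : ℕ} (v : Fin n → ℂ) : vecMulVec (0 : Fin n → ℂ) v = 0 := by
  ext i j; simp [vecMulVec_apply]

theorem vecMulVec_zero_right {n : ℕ} (v : Fin n → ℂ) : vecMulVec v (0 : Fin n → ℂ) = 0 := by
  ext i j; simp [vecMulVec_apply]

theorem vecMulVec_mulVec' {n : ℕ} (v w x : Fin n → ℂ) :
    vecMulVec v w *ᵥ x = (w ⬝ᵥ x) • v := by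
  ext k
  simp [Matrix.mulVec, vecMulVec_apply, dotProduct, Finset.mul_sum, mul_comm, mul_assoc,
    mul_left_comm]

theorem vecMul_vecMulVec' {n : ℕ} (x v w : Fin n → ℂ) :
    x ᵥ* vecMulVec v w = (x ⬝ᵥ v) • w := by
  ext l
  simp [Matrix.vecMul, vecMulVec_apply, dotProduct, Finset.mul_sum, mul_comm, mul_assoc,
    mul_left_comm]

theorem smul_vecMulVec {n : ℕ} (r : ℂ) (v w : Fin n → ℂ) :
    r • vecMulVec v w = vecMulVec (r • v) w := by
  ext i j; simp [vecMulVec_apply]; ring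

theorem S0big_mul_self {n : ℕ} (hn : Odd n) : S0big n * S0big n = 1 := by
  rw [S0big_eq hn, blk3_mul, one_eq_blk3]
  simp [vecMulVec_zero_left, vecMulVec_zero_right, Matrix.neg_mul, Matrix.mul_neg,
    s0mat_mul_self hn]

set_option maxHeartbeats 2000000 in
theorem gauss_decomposition_plus (n : ℕ) (hn : Odd n)
    (m₁p m₁m c₁p c₁m : ℂ) (bp bm Bp Bm : Fin n → ℂ)
    (T₂₂ : Matrix (Fin n) (Fin n) ℂ)
    (hT :
      (blk3 n m₁p (fun k => -(bm k)) c₁m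
        bp T₂₂ (fun k => -((s0mat n *ᵥ Bm) k))
        c₁p (Bp ᵥ* s0mat n) m₁m)ᵀ * S0big n *
      blk3 n m₁p (fun k => -(bm k)) c₁m
        bp T₂₂ (fun k => -((s0mat n *ᵥ Bm) k))
        c₁p (Bp ᵥ* s0mat n) m₁m = S0big n)
    (hm : m₁p ≠ 0) :
    blk3 n m₁p (fun k => -(bm k)) c₁m
        bp T₂₂ (fun k => -((s0mat n *ᵥ Bm) k))
        c₁p (Bp ᵥ* s0mat n) m₁m
      =
      blk3 n 1 0 0
          (fun k => bp k / m₁p) 1 0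
          (((fun k => bp k / m₁p) ⬝ᵥ s0mat n *ᵥ fun k => bp k / m₁p) / 2)
          ((fun k => bp k / m₁p) ᵥ* s0mat n) 1 *
      blk3 n m₁p 0 0
          0 (T₂₂ + m₁p⁻¹ • vecMulVec bp bm) 0
          0 0 m₁p⁻¹ *
      blk3 n 1 (fun k => -(bm k / m₁p))
          (((fun k => bm k / m₁p) ⬝ᵥ s0mat n *ᵥ fun k => bm k / m₁p) / 2)
          0 1 (fun k => -((s0mat n *ᵥ fun l => bm l / m₁p) k))
          0 0 1 := by
  set T := blk3 n m₁p (fun k => -(bm k)) c₁m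
        bp T₂₂ (fun k => -((s0mat n *ᵥ Bm) k))
        c₁p (Bp ᵥ* s0mat n) m₁m with hTdef
  have hS : S0big n * S0big n = 1 := S0big_mul_self hn
  -- T S₀ Tᵀ = S₀
  have h1 : (S0big n * (Tᵀ * S0big n)) * T = 1 := by
    rw [mul_assoc, hT, hS]
  have h1' : T * (S0big n * (Tᵀ * S0big n)) = 1 := mul_eq_one_comm.mp h1
  have h2 : T * S0big n * Tᵀ = S0big n := by
    have h3 : T * S0big n * Tᵀ * (S0big n * S0big n) = 1 * S0big n := by
      rw [show T * S0big n * Tᵀ * (S0big n * S0big n) =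
        (T * (S0big n * (Tᵀ * S0big n))) * S0big n by simp only [mul_assoc], h1']
    rw [hS, mul_one] at h3
    rw [h3, one_mul]
  -- rewrite hT and h2 in block form
  rw [hTdef, blk3_transpose, S0big_eq hn, blk3_mul, blk3_mul] at hT
  rw [hTdef, blk3_transpose, S0big_eq hn, blk3_mul, blk3_mul] at h2
  -- helper facts about s0
  have hsymm : ∀ v : Fin n → ℂ, v ᵥ* s0mat n = s0mat n *ᵥ v := by
    intro v
    rw [← Matrix.mulVec_transpose, s0mat_transpose hn]
  have hs2 : ∀ v : Fin n → ℂ, s0mat n *ᵥ (s0mat n *ᵥ v) = v := by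
    intro v
    rw [Matrix.mulVec_mulVec, s0mat_mul_self hn, Matrix.one_mulVec]
  have hnb : (fun k => -bm k) = -bm := rfl
  have hnB : (fun k => -((s0mat n *ᵥ Bm) k)) = -(s0mat n *ᵥ Bm) := rfl
  -- extract the needed scalar relations
  have E11 := congrFun (congrFun hT (Sum.inl 0)) (Sum.inl 0)
  have E12 := fun l => congrFun (congrFun hT (Sum.inl 0)) (Sum.inr (Sum.inl l))
  have F11 := congrFun (congrFun h2 (Sum.inl 0)) (Sum.inl 0)
  have F13 := congrFun (congrFun h2 (Sum.inl 0)) (Sum.inr (Sum.inr 0))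
  have F21 := fun k => congrFun (congrFun h2 (Sum.inr (Sum.inl k))) (Sum.inl 0)
  simp only [hnb, hnB, blk3, Matrix.of_apply, Pi.add_apply, Pi.smul_apply, Pi.neg_apply,
    Pi.zero_apply, smul_eq_mul, mul_zero, zero_mul, mul_one, one_mul, add_zero, zero_add,
    dotProduct_zero, zero_dotProduct, Matrix.mulVec_zero, Matrix.vecMul_zero,
    Matrix.zero_mulVec, Matrix.zero_vecMul, neg_zero, smul_zero, zero_smul,
    Matrix.mul_neg, Matrix.neg_mul, Matrix.vecMul_neg, Matrix.neg_mulVec,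
    Matrix.mulVec_neg, Matrix.neg_vecMul, neg_dotProduct, dotProduct_neg, neg_neg,
    mul_neg, neg_mul, vecMulVec_zero_left, vecMulVec_zero_right,
    Matrix.add_mulVec, Matrix.add_vecMul, neg_add_rev ] at E11 E12 F11 F13 F21
  clear hT h2 h1 h1'
  -- clean vector/scalar relations
  have hR2v : (bp ᵥ* s0mat n) ᵥ* T₂₂ = m₁p • (Bp ᵥ* s0mat n) - c₁p • bm := by
    funext l
    have h := E12 l
    simp only [Pi.sub_apply, Pi.smul_apply, smul_eq_mul]
    linear_combination -h
  have hR5v : T₂₂ *ᵥ (s0mat n *ᵥ bm) = m₁p • (s0mat n *ᵥ Bm) - c₁m • bp := by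
    funext k
    have h := F21 k
    rw [Matrix.mulVec_mulVec]
    simp only [Pi.sub_apply, Pi.smul_apply, smul_eq_mul]
    linear_combination h
  have hP : bp ᵥ* s0mat n ⬝ᵥ bp = 2*(m₁p*c₁p) := by linear_combination -E11
  have hQ : bm ᵥ* s0mat n ⬝ᵥ bm = 2*(m₁p*c₁m) := by linear_combination -F11
  have hF13 : c₁m*c₁p + bm ⬝ᵥ Bp + m₁p*m₁m = 1 := by
    have h : bm ᵥ* s0mat n ⬝ᵥ Bp ᵥ* s0mat n = bm ⬝ᵥ Bp := by
      rw [← Matrix.dotProduct_mulVec, hsymm Bp, hs2]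
    rw [h] at F13
    linear_combination F13
  have hP' : bp ⬝ᵥ s0mat n *ᵥ bp = 2*(m₁p*c₁p) := by
    rw [Matrix.dotProduct_mulVec]; exact hP
  have hQ' : bm ⬝ᵥ s0mat n *ᵥ bm = 2*(m₁p*c₁m) := by
    rw [Matrix.dotProduct_mulVec]; exact hQ
  have hBps : Bp ᵥ* s0mat n ⬝ᵥ s0mat n *ᵥ bm = bm ⬝ᵥ Bp := by
    rw [Matrix.dotProduct_mulVec, Matrix.vecMul_vecMul, s0mat_mul_self hn,
      Matrix.vecMul_one, dotProduct_comm]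
  -- now compute the product
  have hρ : (fun k => bp k / m₁p) = m₁p⁻¹ • bp := by
    funext k; simp [div_eq_mul_inv, mul_comm]
  have hτ : (fun k => bm k / m₁p) = m₁p⁻¹ • bm := by
    funext k; simp [div_eq_mul_inv, mul_comm]
  have hg1 : (fun k => -(bm k / m₁p)) = -(fun k => bm k / m₁p) := rfl
  have hg2 : (fun k => -((s0mat n *ᵥ fun l => bm l / m₁p) k)) =
      -(s0mat n *ᵥ fun l => bm l / m₁p) := rfl
  rw [hTdef, hg1, hg2, hρ, hτ, blk3_mul, blk3_mul]
  ext i j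
  rcases i with i | k | i <;> rcases j with j | l | j <;>
    simp only [blk3, Matrix.of_apply, Pi.add_apply, Pi.smul_apply, Pi.neg_apply,
      Pi.zero_apply, smul_eq_mul, mul_zero, zero_mul, mul_one, one_mul, add_zero, zero_add,
      dotProduct_zero, zero_dotProduct, Matrix.mulVec_zero, Matrix.vecMul_zero,
      Matrix.zero_mulVec, Matrix.zero_vecMul, neg_zero, smul_zero, zero_smul,
      Matrix.mul_neg, Matrix.neg_mul, Matrix.vecMul_neg, Matrix.neg_mulVec,
      Matrix.mulVec_neg, Matrix.neg_vecMul, neg_dotProduct, dotProduct_neg, neg_neg,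
      mul_neg, neg_mul, vecMulVec_zero_left, vecMulVec_zero_right,
      Matrix.add_mulVec, Matrix.add_vecMul, Matrix.mulVec_add, Matrix.smul_vecMul,
      Matrix.mulVec_smul, Matrix.smul_mulVec, smul_dotProduct, dotProduct_smul,
      Matrix.one_mulVec, Matrix.vecMul_one, Matrix.mul_one, Matrix.one_mul,
      vecMulVec_mulVec', vecMul_vecMulVec', Matrix.add_apply, Matrix.smul_apply,
      Matrix.neg_apply, vecMulVec_apply, Matrix.zero_apply, Matrix.vecMul_add,
      _root_.smul_vecMulVec, Matrix.smul_vecMul, sub_dotProduct, dotProduct_sub,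
      Pi.sub_apply]
  · field_simp
  · rw [hQ']; field_simp
  · field_simp
  · field_simp; ring
  · have h5 := congrFun hR5v k
    simp only [Pi.sub_apply, Pi.smul_apply, smul_eq_mul] at h5
    rw [hQ', h5]; field_simp; ring
  · rw [hP']; field_simp
  · have h2l := congrFun hR2v l
    simp only [Pi.sub_apply, Pi.smul_apply, smul_eq_mul] at h2l
    rw [hP, hP', h2l]
    field_simp
    ring_nf
  · have hw : m₁p * m₁m = 1 - c₁m*c₁p - bm ⬝ᵥ Bp := by linear_combination hF13
    have key : m₁m = (1 - c₁m*c₁p - bm ⬝ᵥ Bp) * m₁p⁻¹ := by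
      rw [← hw]; field_simp
    rw [hR2v]
    simp only [add_dotProduct, sub_dotProduct, smul_dotProduct, smul_eq_mul, hBps, hQ', hP',
      hP, hQ]
    rw [key]
    have h8 : m₁p ^ 8 * m₁p⁻¹ ^ 8 = 1 := by
      rw [← mul_pow, mul_inv_cancel₀ hm, one_pow]
    field_simp
    linear_combination
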